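/- Cardinality of the set of rooted spanning trees: let n ≥ 2 and j : Fin n. Then the number of spanning trees rooted at j, i.e. the number of functions f : Fin n → Fin n with f j = j and such that for every i : Fin n there exists t : ℕ with f^[t] i = j, equals n^(n-2). -/

import Mathlib

open scoped Classical

namespace CayleyAux
variable {n : ℕ}

/-- The forward orbit of `r` under `f`, as a finset. -/
noncomputable def orb (f : Fin n → Fin n) (r : Fin n) : Finset (Fin n) :=
  Finset.univ.filter (fun x => ∃ t, f^[t] r = x)

lemma mem_orb {f : Fin n → Fin n} {r x : Fin n} : x ∈ orb f r ↔ ∃ t, f^[t] r = x := by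
  simp [orb]

lemma self_mem_orb (f : Fin n → Fin n) (r : Fin n) : r ∈ orb f r := mem_orb.2 ⟨0, rfl⟩

lemma apply_mem_orb {f : Fin n → Fin n} {r x : Fin n} (hx : x ∈ orb f r) : f x ∈ orb f r := by
  obtain ⟨t, rfl⟩ := mem_orb.1 hx
  exact mem_orb.2 ⟨t + 1, (Function.iterate_succ_apply' f t r)⟩

lemma iterate_mem_orb {f : Fin n → Fin n} {r x : Fin n} (hx : x ∈ orb f r) (k : ℕ) :
    f^[k] x ∈ orb f r := by
  induction k with
  | zero => exact hx
  | succ k ih => rw [Function.iterate_succ_apply']; exact apply_mem_orb ih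

section Tree
variable {f : Fin n → Fin n} {r0 : Fin n}

/-- stability after reaching a fixed point -/
lemma iterate_stable (hfix : f r0 = r0) {x : Fin n} {t s : ℕ} (h : f^[t] x = r0) (hts : t ≤ s) :
    f^[s] x = r0 := by
  obtain ⟨k, rfl⟩ := Nat.exists_eq_add_of_le hts
  rw [Nat.add_comm, Function.iterate_add_apply, h, Function.iterate_fixed hfix]

/-- injectivity along the path to the root -/
lemma iterate_injOn (hfix : f r0 = r0) {r : Fin n} (hr : ∃ t, f^[t] r = r0) {s t : ℕ}
    (hs : s ≤ Nat.find hr) (ht : t ≤ Nat.find hr) (hst : f^[s] r = f^[t] r) : s = t := by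
  by_contra hne
  -- wlog s < t
  wlog hlt : s < t generalizing s t
  · exact this ht hs hst.symm (Ne.symm hne) (by omega)
  have h1 : f^[Nat.find hr - t + s] r = r0 := by
    rw [Function.iterate_add_apply, hst, ← Function.iterate_add_apply]
    have : Nat.find hr - t + t = Nat.find hr := by omega
    rw [this]
    exact Nat.find_spec hr
  exact Nat.find_min hr (by omega) h1

lemma orb_eq_image (hfix : f r0 = r0) {r : Fin n} (hr : ∃ t, f^[t] r = r0) :
    orb f r = (Finset.range (Nat.find hr + 1)).image (fun i => f^[i] r) := by
  ext x
  simp only [mem_orb, Finset.mem_image, Finset.mem_range]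
  constructor
  · rintro ⟨t, rfl⟩
    rcases le_or_gt t (Nat.find hr) with h | h
    · exact ⟨t, by omega, rfl⟩
    · exact ⟨Nat.find hr, by omega,
        (Nat.find_spec hr).trans (iterate_stable hfix (Nat.find_spec hr) h.le).symm⟩
  · rintro ⟨i, _, rfl⟩; exact ⟨i, rfl⟩

lemma card_orb (hfix : f r0 = r0) {r : Fin n} (hr : ∃ t, f^[t] r = r0) :
    (orb f r).card = Nat.find hr + 1 := by
  rw [orb_eq_image hfix hr, Finset.card_image_of_injOn, Finset.card_range]
  intro s hs t ht hst
  simp only [Finset.coe_range, Set.mem_Iio, Finset.mem_coe, Finset.mem_range] at hs ht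
  exact iterate_injOn hfix hr (by omega) (by omega) hst

end Tree

end CayleyAux

namespace CayleyAux2
variable {n : ℕ}

noncomputable def reroot (f : Fin n → Fin n) (r : Fin n) (x : Fin n) : Fin n :=
  if x = r then r
  else if h : ∃ t, f^[t] r = x then f^[Nat.find h - 1] r
  else f x

lemma reroot_root (f : Fin n → Fin n) (r : Fin n) : reroot f r r = r := if_pos rfl

lemma reroot_notMem {f : Fin n → Fin n} {r x : Fin n} (h : ¬ ∃ t, f^[t] r = x) :
    reroot f r x = f x := by
  have hxr : x ≠ r := fun he => h ⟨0, he.symm⟩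
  rw [reroot, if_neg hxr, dif_neg h]

section Tree
variable {f : Fin n → Fin n} {r0 : Fin n}

lemma reroot_path (hfix : f r0 = r0) (hreach : ∀ x, ∃ t, f^[t] x = r0) (r : Fin n)
    {i : ℕ} (h1 : 1 ≤ i) (hi : i ≤ Nat.find (hreach r)) :
    reroot f r (f^[i] r) = f^[i - 1] r := by
  have hne : f^[i] r ≠ r := by
    intro he
    have := CayleyAux.iterate_injOn (f := f) (r0 := r0) hfix (hreach r) hi
      (Nat.zero_le _) (by simpa using he)
    omega
  have hmem : ∃ t, f^[t] r = f^[i] r := ⟨i, rfl⟩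
  rw [reroot, if_neg hne, dif_pos hmem]
  have hfind : Nat.find hmem = i := by
    have hle : Nat.find hmem ≤ i := Nat.find_le rfl
    exact CayleyAux.iterate_injOn hfix (hreach r) (le_trans hle hi) hi (Nat.find_spec hmem)
  rw [hfind]

lemma reroot_iterate (hfix : f r0 = r0) (hreach : ∀ x, ∃ t, f^[t] x = r0) (r : Fin n)
    {i : ℕ} (hi : i ≤ Nat.find (hreach r)) (k : ℕ) :
    (reroot f r)^[k] (f^[i] r) = f^[i - k] r := by
  induction k with
  | zero => simp
  | succ k ih =>
    rw [Function.iterate_succ_apply', ih]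
    rcases Nat.eq_zero_or_pos (i - k) with h0 | hpos
    · have h1 : i - (k+1) = 0 := by omega
      rw [h0, h1]
      simpa using reroot_root f r
    · have : i - k - 1 = i - (k + 1) := by omega
      rw [reroot_path hfix hreach r hpos (by omega), this]

lemma reroot_reaches (hfix : f r0 = r0) (hreach : ∀ x, ∃ t, f^[t] x = r0) (r : Fin n)
    (x : Fin n) : ∃ t, (reroot f r)^[t] x = r := by
  -- strong induction on the time to reach r0 under f
  generalize hd : Nat.find (hreach x) = d
  induction d using Nat.strong_induction_on generalizing x with
  | _ d ih =>
    by_cases hx : ∃ t, f^[t] r = x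
    · -- x is on the path from r to r0
      have hiw : ∃ i, i ≤ Nat.find (hreach r) ∧ f^[i] r = x := by
        rcases le_or_gt (Nat.find hx) (Nat.find (hreach r)) with h | h
        · exact ⟨Nat.find hx, h, Nat.find_spec hx⟩
        · refine ⟨Nat.find (hreach r), le_rfl, ?_⟩
          rw [Nat.find_spec (hreach r)]
          rw [← CayleyAux.iterate_stable hfix (Nat.find_spec (hreach r)) h.le, Nat.find_spec hx]
      obtain ⟨i, hi, rfl⟩ := hiw
      exact ⟨i, by rw [reroot_iterate hfix hreach r hi]; simp⟩
    · -- step along f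
      have hxr0 : x ≠ r0 := by
        rintro rfl; exact hx ⟨Nat.find (hreach r), Nat.find_spec (hreach r)⟩
      have hd1 : 1 ≤ d := by
        rcases Nat.eq_zero_or_pos d with h0 | h1
        · exfalso; apply hxr0
          have := Nat.find_spec (hreach x); rw [hd, h0] at this; simpa using this
        · exact h1
      have hfx : Nat.find (hreach (f x)) < d := by
        have hdx : f^[d] x = r0 := by rw [← hd]; exact Nat.find_spec (hreach x)
        have h2 : d - 1 + 1 = d := by omega
        rw [← h2] at hdx
        rw [Function.iterate_succ_apply] at hdx
        have := Nat.find_le (h := hreach (f x)) hdx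
        omega
      obtain ⟨t, ht⟩ := ih _ hfx (f x) rfl
      exact ⟨t + 1, by rwa [Function.iterate_succ_apply, reroot_notMem hx]⟩

lemma reroot_reroot (hfix : f r0 = r0) (hreach : ∀ x, ∃ t, f^[t] x = r0) (r : Fin n) :
    reroot (reroot f r) r0 = f := by
  set f' := reroot f r with hf'
  set T := Nat.find (hreach r) with hT
  have hpT : f^[T] r = r0 := Nat.find_spec (hreach r)
  have horb : ∀ k, f'^[k] r0 = f^[T - k] r := by
    intro k
    rw [← hpT, reroot_iterate hfix hreach r le_rfl]
  funext x
  by_cases hx0 : x = r0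
  · subst hx0
    rw [reroot_root, hfix]
  by_cases hx : ∃ t, f'^[t] r0 = x
  · -- on the reversed path
    set s := Nat.find hx with hs
    have hsspec : f'^[s] r0 = x := Nat.find_spec hx
    have hs1 : 1 ≤ s := by
      rcases Nat.eq_zero_or_pos s with h0 | h1
      · exfalso; apply hx0; rw [← hsspec, h0]; simp
      · exact h1
    have hsT : s ≤ T := by
      by_contra hgt
      push_neg at hgt
      have hxr : x = r := by
        rw [← hsspec, horb s]
        have : T - s = 0 := by omega
        rw [this]; simp
      have : f'^[T] r0 = x := by
        rw [horb T]; simp [hxr]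
      have := Nat.find_le (h := hx) this
      omega
    have hxval : x = f^[T - s] r := by rw [← hsspec, horb s]
    rw [reroot, if_neg hx0, dif_pos hx, ← hs]
    rw [horb (s - 1)]
    have h1 : T - (s - 1) = (T - s) + 1 := by omega
    rw [h1, hxval, ← Function.iterate_succ_apply' f]
  · -- off the path entirely
    have hxP : ¬ ∃ t, f^[t] r = x := by
      rintro ⟨t, rfl⟩
      rcases le_or_gt t T with h | h
      · exact hx ⟨T - t, by rw [horb]; congr 1; omega⟩
      · exact hx0 (CayleyAux.iterate_stable hfix hpT h.le)
    rw [reroot_notMem hx, hf', reroot_notMem hxP]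

end Tree
end CayleyAux2
namespace CayleyAux3
open CayleyAux
variable {n : ℕ}

noncomputable def per (g : Fin n → Fin n) : Finset (Fin n) :=
  Finset.univ.filter (fun x => ∃ k, 0 < k ∧ g^[k] x = x)

lemma mem_per {g : Fin n → Fin n} {x : Fin n} : x ∈ per g ↔ ∃ k, 0 < k ∧ g^[k] x = x := by
  simp [per]

lemma iterate_per {g : Fin n → Fin n} {x : Fin n} {k : ℕ} (h : g^[k] x = x) (q : ℕ) :
    g^[k * q] x = x := by
  rw [Function.iterate_mul]
  exact Function.iterate_fixed h q

lemma apply_mem_per {g : Fin n → Fin n} {x : Fin n} (hx : x ∈ per g) : g x ∈ per g := by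
  obtain ⟨k, hk, hkx⟩ := mem_per.1 hx
  refine mem_per.2 ⟨k, hk, ?_⟩
  rw [← Function.iterate_succ_apply, Function.iterate_succ_apply', hkx]

lemma per_injOn {g : Fin n → Fin n} {x y : Fin n} (hx : x ∈ per g) (hy : y ∈ per g)
    (hxy : g x = g y) : x = y := by
  obtain ⟨k, hk, hkx⟩ := mem_per.1 hx
  obtain ⟨l, hl, hly⟩ := mem_per.1 hy
  have hxkl : g^[k * l] x = x := iterate_per hkx l
  have hykl : g^[k * l] y = y := by rw [Nat.mul_comm]; exact iterate_per hly k
  have h1 : 1 ≤ k * l := Nat.one_le_iff_ne_zero.2 (by positivity)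
  have e : k * l - 1 + 1 = k * l := by omega
  calc x = g^[k*l] x := hxkl.symm
    _ = g^[k*l - 1] (g x) := by rw [← Function.iterate_succ_apply, Nat.succ_eq_add_one, e]
    _ = g^[k*l - 1] (g y) := by rw [hxy]
    _ = g^[k*l] y := by rw [← Function.iterate_succ_apply, Nat.succ_eq_add_one, e]
    _ = y := hykl

lemma orbit_hits_per (g : Fin n → Fin n) (x : Fin n) : ∃ t, g^[t] x ∈ per g := by
  have hlt : (Finset.univ : Finset (Fin n)).card < (Finset.range (n + 1)).card := by
    simp
  obtain ⟨s, -, t, -, hst, he⟩ := Finset.exists_ne_map_eq_of_card_lt_of_maps_to hlt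
    (fun (t : ℕ) (_ : t ∈ Finset.range (n+1)) => Finset.mem_univ (g^[t] x))
  rcases Nat.lt_or_ge s t with h | h
  · refine ⟨s, mem_per.2 ⟨t - s, by omega, ?_⟩⟩
    rw [← Function.iterate_add_apply]
    rw [show t - s + s = t by omega, he]
  · have h' : t < s := by omega
    refine ⟨t, mem_per.2 ⟨s - t, by omega, ?_⟩⟩
    rw [← Function.iterate_add_apply]
    rw [show s - t + t = s by omega, ← he]

lemma per_nonempty (g : Fin n → Fin n) (x : Fin n) : (per g).Nonempty := by
  obtain ⟨t, ht⟩ := orbit_hits_per g x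
  exact ⟨_, ht⟩

/-- Everything in a finite set on which `g` is injective and into is periodic. -/
lemma mem_per_of_mapsTo {g : Fin n → Fin n} {S : Finset (Fin n)}
    (hmap : ∀ x ∈ S, g x ∈ S) (hinj : ∀ x ∈ S, ∀ y ∈ S, g x = g y → x = y) :
    ∀ x ∈ S, x ∈ per g := by
  have hitmem : ∀ k, ∀ x ∈ S, g^[k] x ∈ S := by
    intro k
    induction k with
    | zero => simpa using fun x hx => hx
    | succ k ih =>
      intro x hx
      rw [Function.iterate_succ_apply]
      exact ih _ (hmap x hx)
  have hitinj : ∀ k, ∀ x ∈ S, ∀ y ∈ S, g^[k] x = g^[k] y → x = y := by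
    intro k
    induction k with
    | zero => simpa using fun x _ y _ h => h
    | succ k ih =>
      intro x hx y hy h
      rw [Function.iterate_succ_apply, Function.iterate_succ_apply] at h
      exact hinj x hx y hy (ih _ (hmap x hx) _ (hmap y hy) h)
  intro x hx
  have hlt : (S).card < (Finset.range (S.card + 1)).card := by simp
  obtain ⟨s, -, t, -, hst, he⟩ := Finset.exists_ne_map_eq_of_card_lt_of_maps_to hlt
    (fun (t : ℕ) (_ : t ∈ Finset.range (S.card+1)) => hitmem t x hx)
  suffices h : ∀ s t : ℕ, s < t → g^[s] x = g^[t] x → x ∈ per g by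
    rcases Nat.lt_or_ge s t with hlt' | hge
    · exact h s t hlt' he
    · exact h t s (by omega) he.symm
  intro s t hlt' he'
  refine mem_per.2 ⟨t - s, by omega, ?_⟩
  apply hitinj s _ (hitmem _ _ hx) _ hx
  rw [← Function.iterate_add_apply, show s + (t - s) = t by omega]
  exact he'.symm

end CayleyAux3
namespace CayleyAux4
open CayleyAux CayleyAux3
variable {n : ℕ}

/-- Encode a tree rooted at the end of the orbit of `a` as an arbitrary function:
put the orbit of `a` (the "spine") on the sorted positions. -/
noncomputable def spine (f1 : Fin n → Fin n) (a : Fin n) : Fin n → Fin n :=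
  fun x => if x ∈ orb f1 a then f1^[((orb f1 a).sort (· ≤ ·)).idxOf x] a else f1 x

lemma spine_mem {f1 : Fin n → Fin n} {a x : Fin n} (hx : x ∈ orb f1 a) :
    spine f1 a x = f1^[((orb f1 a).sort (· ≤ ·)).idxOf x] a := if_pos hx

lemma spine_notMem {f1 : Fin n → Fin n} {a x : Fin n} (hx : x ∉ orb f1 a) :
    spine f1 a x = f1 x := if_neg hx

/-- The spine of an arbitrary function `g`: the images under `g` of the sorted
list of periodic points. -/
noncomputable def dList (g : Fin n → Fin n) : List (Fin n) :=
  ((per g).sort (· ≤ ·)).map g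

noncomputable def dTree (g : Fin n → Fin n) : Fin n → Fin n :=
  fun x => if x ∈ per g then (dList g).getD ((dList g).idxOf x + 1) x else g x

noncomputable def dA (g : Fin n → Fin n) (d : Fin n) : Fin n := (dList g).getD 0 d

noncomputable def dB (g : Fin n → Fin n) (d : Fin n) : Fin n :=
  (dList g).getD ((dList g).length - 1) d

lemma length_dList (g : Fin n → Fin n) : (dList g).length = (per g).card := by
  simp [dList]

lemma dList_get (g : Fin n → Fin n) (i : ℕ) (h : i < (dList g).length) :
    (dList g).get ⟨i, h⟩ =
      g (((per g).sort (· ≤ ·)).get ⟨i, by simpa [dList] using h⟩) :=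
  List.getElem_map g

lemma dList_get_mem (g : Fin n → Fin n) (i : ℕ) (h : i < (dList g).length) :
    (dList g).get ⟨i, h⟩ ∈ per g := by
  rw [dList_get]
  exact apply_mem_per ((Finset.mem_sort (α := Fin n) (· ≤ ·)).1 (List.get_mem _ _))

lemma nodup_dList (g : Fin n → Fin n) : (dList g).Nodup := by
  refine List.Nodup.map_on ?_ (Finset.sort_nodup _ _)
  intro x hx y hy hxy
  exact per_injOn (Finset.mem_sort (α := Fin n) (· ≤ ·) |>.1 hx)
    (Finset.mem_sort (α := Fin n) (· ≤ ·) |>.1 hy) hxy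

lemma mem_dList {g : Fin n → Fin n} {x : Fin n} : x ∈ dList g ↔ x ∈ per g := by
  constructor
  · intro hx
    obtain ⟨⟨i, hi⟩, rfl⟩ := List.mem_iff_get.1 hx
    exact dList_get_mem g i hi
  · intro hx
    have hsub : (dList g).toFinset ⊆ per g := by
      intro y hy
      obtain ⟨⟨i, hi⟩, rfl⟩ := List.mem_iff_get.1 (List.mem_toFinset.1 hy)
      exact dList_get_mem g i hi
    have hcard : (per g).card ≤ (dList g).toFinset.card := by
      rw [List.toFinset_card_of_nodup (nodup_dList g), length_dList]
    rw [← Finset.eq_of_subset_of_card_le hsub hcard] at hx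
    exact List.mem_toFinset.1 hx

lemma dTree_notMem {g : Fin n → Fin n} {x : Fin n} (hx : x ∉ per g) : dTree g x = g x :=
  if_neg hx

lemma dTree_get {g : Fin n → Fin n} {i : ℕ} (h : i + 1 < (dList g).length) :
    dTree g ((dList g).get ⟨i, by omega⟩) = (dList g).get ⟨i + 1, h⟩ := by
  have hmem := dList_get_mem g i (by omega)
  have hidx : (dList g).idxOf ((dList g).get ⟨i, by omega⟩) = i :=
    List.get_idxOf (nodup_dList g) _
  rw [dTree, if_pos hmem, hidx, List.getD_eq_get _ _ ⟨_, h⟩]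

lemma dTree_last {g : Fin n → Fin n} {i : ℕ} (hi : i + 1 = (dList g).length) :
    dTree g ((dList g).get ⟨i, by omega⟩) = (dList g).get ⟨i, by omega⟩ := by
  have hmem := dList_get_mem g i (by omega)
  have hidx : (dList g).idxOf ((dList g).get ⟨i, by omega⟩) = i :=
    List.get_idxOf (nodup_dList g) _
  rw [dTree, if_pos hmem, hidx, List.getD_eq_default _ _ (by omega)]

lemma dTree_mem {g : Fin n → Fin n} {x : Fin n} (hx : x ∈ per g) : dTree g x ∈ per g := by
  rcases lt_or_ge ((dList g).idxOf x + 1) (dList g).length with h | h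
  · rw [dTree, if_pos hx, List.getD_eq_get _ _ ⟨_, h⟩]
    exact dList_get_mem g _ h
  · rw [dTree, if_pos hx, List.getD_eq_default _ _ h]
    exact hx

lemma dB_eq_get {g : Fin n → Fin n} (d : Fin n) (hne : (per g).Nonempty) :
    dB g d = (dList g).get ⟨(dList g).length - 1, by
      have := length_dList g; have := Finset.card_pos.2 hne; omega⟩ := by
  rw [dB, List.getD_eq_get (dList g) d ⟨(dList g).length - 1, by
    have := length_dList g; have := Finset.card_pos.2 hne; omega⟩]

lemma dA_eq_get {g : Fin n → Fin n} (d : Fin n) (hne : (per g).Nonempty) :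
    dA g d = (dList g).get ⟨0, by
      have := length_dList g; have := Finset.card_pos.2 hne; omega⟩ := by
  rw [dA, List.getD_eq_get (dList g) d ⟨0, by
    have := length_dList g; have := Finset.card_pos.2 hne; omega⟩]

lemma dTree_fix {g : Fin n → Fin n} (d : Fin n) (hne : (per g).Nonempty) :
    dTree g (dB g d) = dB g d := by
  have hlen : 0 < (dList g).length := by
    have := length_dList g; have := Finset.card_pos.2 hne; omega
  rw [dB_eq_get d hne]
  exact dTree_last (by omega)

/-- every vertex reaches `dB g d` under `dTree g`. -/
lemma dTree_reach {g : Fin n → Fin n} (d : Fin n) (hne : (per g).Nonempty) (x : Fin n) :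
    ∃ t, (dTree g)^[t] x = dB g d := by
  have hlen : 0 < (dList g).length := by
    have := length_dList g; have := Finset.card_pos.2 hne; omega
  -- step 1: every element of the spine reaches the last one
  have hspine : ∀ k i (hi : i < (dList g).length), (dList g).length - 1 - i = k →
      ∃ t, (dTree g)^[t] ((dList g).get ⟨i, hi⟩) = dB g d := by
    intro k
    induction k with
    | zero =>
      intro i hi hk
      have : i = (dList g).length - 1 := by omega
      subst this
      exact ⟨0, by simp [dB_eq_get d hne]⟩
    | succ k ih =>
      intro i hi hk
      have hi1 : i + 1 < (dList g).length := by omega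
      obtain ⟨t, ht⟩ := ih (i + 1) hi1 (by omega)
      refine ⟨t + 1, ?_⟩
      rw [Function.iterate_succ_apply, dTree_get hi1, ht]
  have hper : ∀ x ∈ per g, ∃ t, (dTree g)^[t] x = dB g d := by
    intro x hx
    obtain ⟨⟨i, hi⟩, rfl⟩ := List.mem_iff_get.1 (mem_dList.2 hx)
    exact hspine _ i hi rfl
  -- step 2: induction on hitting time of per g
  generalize he : Nat.find (orbit_hits_per g x) = e
  induction e using Nat.strong_induction_on generalizing x with
  | _ e ih =>
    by_cases hx : x ∈ per g
    · exact hper x hx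
    · have he1 : 1 ≤ e := by
        rcases Nat.eq_zero_or_pos e with h0 | h1
        · exfalso
          have := Nat.find_spec (orbit_hits_per g x)
          rw [he, h0] at this
          exact hx (by simpa using this)
        · exact h1
      have hgx : Nat.find (orbit_hits_per g (g x)) < e := by
        have hsp : g^[e - 1] (g x) ∈ per g := by
          rw [← Function.iterate_succ_apply, Nat.succ_eq_add_one]
          have h2 : e - 1 + 1 = e := by omega
          rw [h2, ← he]
          exact Nat.find_spec (orbit_hits_per g x)
        have := Nat.find_le (h := orbit_hits_per g (g x)) hsp
        omega
      obtain ⟨t, ht⟩ := ih _ hgx (g x) rfl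
      exact ⟨t + 1, by rwa [Function.iterate_succ_apply, dTree_notMem hx]⟩

/-- the orbit of `dA g d` under `dTree g` is exactly the set of periodic points of `g`. -/
lemma orb_dTree {g : Fin n → Fin n} (d : Fin n) (hne : (per g).Nonempty) :
    orb (dTree g) (dA g d) = per g := by
  have hlen : 0 < (dList g).length := by
    have := length_dList g; have := Finset.card_pos.2 hne; omega
  have hiter : ∀ i (hi : i < (dList g).length),
      (dTree g)^[i] (dA g d) = (dList g).get ⟨i, hi⟩ := by
    intro i
    induction i with
    | zero => intro hi; simpa using dA_eq_get d hne
    | succ i ih =>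
      intro hi
      rw [Function.iterate_succ_apply', ih (by omega), dTree_get hi]
  ext x
  simp only [mem_orb]
  constructor
  · rintro ⟨t, rfl⟩
    have : ∀ t, (dTree g)^[t] (dA g d) ∈ per g := by
      intro t
      induction t with
      | zero =>
        simp only [Function.iterate_zero, id_eq]
        rw [dA_eq_get d hne]
        exact dList_get_mem g _ _
      | succ t ih =>
        rw [Function.iterate_succ_apply']
        exact dTree_mem ih
    exact this t
  · intro hx
    obtain ⟨⟨i, hi⟩, rfl⟩ := List.mem_iff_get.1 (mem_dList.2 hx)
    exact ⟨i, hiter i hi⟩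

/-- round trip: despine then spine gives back `g`. -/
lemma spine_dTree {g : Fin n → Fin n} (d : Fin n) (hne : (per g).Nonempty) :
    spine (dTree g) (dA g d) = g := by
  have hlen : 0 < (dList g).length := by
    have := length_dList g; have := Finset.card_pos.2 hne; omega
  have hiter : ∀ i (hi : i < (dList g).length),
      (dTree g)^[i] (dA g d) = (dList g).get ⟨i, hi⟩ := by
    intro i
    induction i with
    | zero => intro hi; simpa using dA_eq_get d hne
    | succ i ih =>
      intro hi
      rw [Function.iterate_succ_apply', ih (by omega), dTree_get hi]
  funext x
  by_cases hx : x ∈ per g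
  · have hxorb : x ∈ orb (dTree g) (dA g d) := by rw [orb_dTree d hne]; exact hx
    rw [spine_mem hxorb, orb_dTree d hne]
    -- x is in the sorted list of per g
    have hxs : x ∈ (per g).sort (· ≤ ·) := (Finset.mem_sort _).2 hx
    set SL := (per g).sort (· ≤ ·) with hSL
    have hidx : SL.idxOf x < SL.length := List.idxOf_lt_length_iff.2 hxs
    have hlen2 : SL.length = (dList g).length := by simp [dList, hSL]
    rw [hiter (SL.idxOf x) (by omega)]
    rw [dList_get]
    congr 1
    exact List.idxOf_get hidx
  · have hxorb : x ∉ orb (dTree g) (dA g d) := by rw [orb_dTree d hne]; exact hx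
    rw [spine_notMem hxorb, dTree_notMem hx]

end CayleyAux4
namespace CayleyAux5
open CayleyAux CayleyAux3 CayleyAux4
variable {n : ℕ}

section
variable {f1 : Fin n → Fin n} {b a : Fin n}

lemma sort_get_spine (hfix : f1 b = b) (hreach : ∀ x, ∃ t, f1^[t] x = b) (a : Fin n)
    {i : ℕ} (hi : i < ((orb f1 a).sort (· ≤ ·)).length) :
    spine f1 a (((orb f1 a).sort (· ≤ ·)).get ⟨i, hi⟩) = f1^[i] a := by
  have hmem : ((orb f1 a).sort (· ≤ ·)).get ⟨i, hi⟩ ∈ orb f1 a :=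
    (Finset.mem_sort _).1 (List.get_mem _ _)
  rw [spine_mem hmem, List.get_idxOf (Finset.sort_nodup _ _)]

lemma spine_maps (hfix : f1 b = b) (hreach : ∀ x, ∃ t, f1^[t] x = b) (a : Fin n)
    {x : Fin n} (hx : x ∈ orb f1 a) : spine f1 a x ∈ orb f1 a := by
  rw [spine_mem hx]
  exact mem_orb.2 ⟨_, rfl⟩

lemma spine_injOn (hfix : f1 b = b) (hreach : ∀ x, ∃ t, f1^[t] x = b) (a : Fin n)
    {x y : Fin n} (hx : x ∈ orb f1 a) (hy : y ∈ orb f1 a)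
    (hxy : spine f1 a x = spine f1 a y) : x = y := by
  have hlen : ((orb f1 a).sort (· ≤ ·)).length = Nat.find (hreach a) + 1 := by
    rw [Finset.length_sort, card_orb hfix (hreach a)]
  have hix : ((orb f1 a).sort (· ≤ ·)).idxOf x < ((orb f1 a).sort (· ≤ ·)).length :=
    List.idxOf_lt_length_iff.2 ((Finset.mem_sort _).2 hx)
  have hiy : ((orb f1 a).sort (· ≤ ·)).idxOf y < ((orb f1 a).sort (· ≤ ·)).length :=
    List.idxOf_lt_length_iff.2 ((Finset.mem_sort _).2 hy)
  rw [spine_mem hx, spine_mem hy] at hxy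
  have h2 := iterate_injOn hfix (hreach a) (by omega) (by omega) hxy
  calc x = ((orb f1 a).sort (· ≤ ·)).get ⟨((orb f1 a).sort (· ≤ ·)).idxOf x, hix⟩ :=
      (List.idxOf_get hix).symm
    _ = ((orb f1 a).sort (· ≤ ·)).get ⟨((orb f1 a).sort (· ≤ ·)).idxOf y, hiy⟩ := by
      congr 1
      exact Fin.ext h2
    _ = y := List.idxOf_get hiy

lemma per_spine (hfix : f1 b = b) (hreach : ∀ x, ∃ t, f1^[t] x = b) (a : Fin n) :
    per (spine f1 a) = orb f1 a := by
  set g := spine f1 a with hg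
  apply Finset.Subset.antisymm
  · -- every periodic point of g is in the orbit
    intro x hx
    by_contra hxP
    -- the g-orbit of any point eventually enters orb f1 a
    have key : ∀ e y, Nat.find (hreach y) = e → ∃ t, g^[t] y ∈ orb f1 a := by
      intro e
      induction e using Nat.strong_induction_on with
      | _ e ih =>
        intro y he
        by_cases hy : y ∈ orb f1 a
        · exact ⟨0, hy⟩
        · have hyb : y ≠ b := by
            rintro rfl
            exact hy (mem_orb.2 ⟨Nat.find (hreach a), Nat.find_spec (hreach a)⟩)
          have he1 : 1 ≤ e := by
            rcases Nat.eq_zero_or_pos e with h0 | h1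
            · exfalso; apply hyb
              have := Nat.find_spec (hreach y); rw [he, h0] at this; simpa using this
            · exact h1
          have hfy : Nat.find (hreach (f1 y)) < e := by
            have hsp : f1^[e - 1] (f1 y) = b := by
              rw [← Function.iterate_succ_apply, Nat.succ_eq_add_one]
              have h2 : e - 1 + 1 = e := by omega
              rw [h2, ← he]
              exact Nat.find_spec (hreach y)
            have := Nat.find_le (h := hreach (f1 y)) hsp
            omega
          obtain ⟨t, ht⟩ := ih _ hfy (f1 y) rfl
          exact ⟨t + 1, by rwa [Function.iterate_succ_apply, hg, spine_notMem hy]⟩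
    obtain ⟨t, ht⟩ := key _ x rfl
    -- orbit closed under g-iterates
    have hclosed : ∀ s y, y ∈ orb f1 a → g^[s] y ∈ orb f1 a := by
      intro s
      induction s with
      | zero => exact fun y hy => hy
      | succ s ih =>
        intro y hy
        rw [Function.iterate_succ_apply]
        exact ih _ (spine_maps hfix hreach a hy)
    obtain ⟨k, hk, hkx⟩ := mem_per.1 hx
    rcases Nat.eq_zero_or_pos t with h0 | h1
    · rw [h0] at ht; exact hxP (by simpa using ht)
    · have hx2 : x = g^[k * t - t] (g^[t] x) := by
        rw [← Function.iterate_add_apply]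
        have h3 : k * t - t + t = k * t := by
          have : t ≤ k * t := Nat.le_mul_of_pos_left t hk
          omega
        rw [h3, iterate_per hkx]
      rw [hx2] at hxP
      exact hxP (hclosed _ _ ht)
  · exact mem_per_of_mapsTo (fun x hx => spine_maps hfix hreach a hx)
      (fun x hx y hy => spine_injOn hfix hreach a hx hy)

lemma dList_spine_get (hfix : f1 b = b) (hreach : ∀ x, ∃ t, f1^[t] x = b) (a : Fin n)
    {i : ℕ} (hi : i < (dList (spine f1 a)).length) :
    (dList (spine f1 a)).get ⟨i, hi⟩ = f1^[i] a := by
  rw [dList_get]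
  have hsorteq : (per (spine f1 a)).sort (· ≤ ·) = (orb f1 a).sort (· ≤ ·) := by
    rw [per_spine hfix hreach a]
  rw [List.get_of_eq hsorteq]
  exact sort_get_spine hfix hreach a _

lemma length_dList_spine (hfix : f1 b = b) (hreach : ∀ x, ∃ t, f1^[t] x = b) (a : Fin n) :
    (dList (spine f1 a)).length = Nat.find (hreach a) + 1 := by
  rw [length_dList, per_spine hfix hreach a, card_orb hfix (hreach a)]

lemma dA_spine (hfix : f1 b = b) (hreach : ∀ x, ∃ t, f1^[t] x = b) (a d : Fin n) :
    dA (spine f1 a) d = a := by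
  have hlen := length_dList_spine hfix hreach a
  have h0 : (0:ℕ) < (dList (spine f1 a)).length := by omega
  rw [dA, List.getD_eq_get _ _ ⟨_, h0⟩, dList_spine_get hfix hreach a]
  simp

lemma dB_spine (hfix : f1 b = b) (hreach : ∀ x, ∃ t, f1^[t] x = b) (a d : Fin n) :
    dB (spine f1 a) d = b := by
  have hlen := length_dList_spine hfix hreach a
  have h0 : (dList (spine f1 a)).length - 1 < (dList (spine f1 a)).length := by omega
  rw [dB, List.getD_eq_get _ _ ⟨_, h0⟩, dList_spine_get hfix hreach a]
  rw [show (dList (spine f1 a)).length - 1 = Nat.find (hreach a) by omega]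
  exact Nat.find_spec (hreach a)

lemma dTree_spine (hfix : f1 b = b) (hreach : ∀ x, ∃ t, f1^[t] x = b) (a : Fin n) :
    dTree (spine f1 a) = f1 := by
  set g := spine f1 a with hg
  have hlen := length_dList_spine hfix hreach a
  rw [← hg] at hlen
  funext x
  by_cases hx : x ∈ per g
  · obtain ⟨⟨i, hi⟩, rfl⟩ := List.mem_iff_get.1 (mem_dList.2 hx)
    rcases lt_or_ge (i + 1) (dList g).length with h | h
    · rw [dTree_get h, dList_spine_get hfix hreach a, dList_spine_get hfix hreach a,
        Function.iterate_succ_apply']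
    · have hieq : i + 1 = (dList g).length := by omega
      rw [dTree_last hieq, dList_spine_get hfix hreach a]
      rw [show i = Nat.find (hreach a) by omega]
      rw [Nat.find_spec (hreach a), hfix]
  · have hxorb : x ∉ orb f1 a := by rw [← per_spine hfix hreach a]; exact hx
    rw [dTree_notMem hx, hg, spine_notMem hxorb]

end
end CayleyAux5
open CayleyAux CayleyAux2 CayleyAux3 CayleyAux4 CayleyAux5 in
/-- Cardinality of the set of spanning trees rooted at `j`: there are exactly
`n ^ (n - 2)` functions `f : Fin n → Fin n` with `f j = j` such that every
vertex reaches `j` under iteration of `f`. -/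
theorem card_rooted_spanning_trees (n : ℕ) (hn : 2 ≤ n) (j : Fin n) :
    (Finset.univ.filter (fun f : Fin n → Fin n =>
        f j = j ∧ ∀ i : Fin n, ∃ t : ℕ, f^[t] i = j)).card = n ^ (n - 2) := by
  classical
  have key : ((Finset.univ.filter (fun f : Fin n → Fin n =>
        f j = j ∧ ∀ i : Fin n, ∃ t : ℕ, f^[t] i = j)) ×ˢ
        (Finset.univ : Finset (Fin n × Fin n))).card
      = (Finset.univ : Finset (Fin n → Fin n)).card := by
    apply Finset.card_bij'
      (fun p _ => spine (reroot p.1 p.2.2) p.2.1)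
      (fun g _ => (reroot (dTree g) j, dA g j, dB g j))
    · intro p _
      exact Finset.mem_univ _
    · intro g _
      have hne : (per g).Nonempty := per_nonempty g j
      have hfixB : dTree g (dB g j) = dB g j := dTree_fix j hne
      have hreachB : ∀ x, ∃ t, (dTree g)^[t] x = dB g j := dTree_reach j hne
      rw [Finset.mem_product]
      refine ⟨Finset.mem_filter.2 ⟨Finset.mem_univ _, ?_, ?_⟩, Finset.mem_univ _⟩
      · exact reroot_root _ _
      · exact reroot_reaches hfixB hreachB j
    · rintro ⟨f, a, b⟩ hp
      rw [Finset.mem_product, Finset.mem_filter] at hp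
      obtain ⟨⟨-, hfix, hreach⟩, -⟩ := hp
      have h1 : (reroot f b) b = b := reroot_root f b
      have h2 : ∀ x, ∃ t, (reroot f b)^[t] x = b := reroot_reaches hfix hreach b
      simp only
      rw [dTree_spine h1 h2 a, dA_spine h1 h2 a j, dB_spine h1 h2 a j,
        reroot_reroot hfix hreach b]
    · intro g _
      have hne : (per g).Nonempty := per_nonempty g j
      have hfixB : dTree g (dB g j) = dB g j := dTree_fix j hne
      have hreachB : ∀ x, ∃ t, (dTree g)^[t] x = dB g j := dTree_reach j hne
      simp only
      rw [reroot_reroot hfixB hreachB j, spine_dTree j hne]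
  rw [Finset.card_product] at key
  simp only [Finset.card_univ, Fintype.card_prod, Fintype.card_fin, Fintype.card_fun] at key
  have hpow : n ^ n = n ^ (n - 2) * (n * n) := by
    have h2 : n - 2 + 2 = n := Nat.sub_add_cancel hn
    calc n ^ n = n ^ (n - 2 + 2) := by rw [h2]
      _ = n ^ (n - 2) * n ^ 2 := pow_add n (n - 2) 2
      _ = n ^ (n - 2) * (n * n) := by rw [pow_two]
  rw [hpow] at key
  have hpos : 0 < n * n := by positivity
  exact Nat.eq_of_mul_eq_mul_right hpos key
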